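/- Let δ_i > 0 and, for 0 < ε < δ_i, let g_{i,ε} : ℝ → ℝ be defined by g_{i,ε}(s) = 0 if |s| ≤ δ_i − ε, g_{i,ε}(s) = (1/(12ε))·(|s| − δ_i + ε)³ if δ_i − ε ≤ |s| ≤ δ_i + ε, and g_{i,ε}(s) = ε²/6 + (1/2)·(|s| − δ_i)² if |s| ≥ δ_i + ε. Define K_{i,ε}(s) = ∫₀^s √(g_{i,ε}''(τ)) dτ. Then |K_{i,ε}(s)| ≤ |s| for every s ∈ ℝ and every ε ∈ (0, δ_i), and for every s ∈ ℝ one has K_{i,ε}(s) → (|s| − δ_i)₊ · sign(s) as ε → 0⁺. -/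

import Mathlib

open MeasureTheory intervalIntegral Set Filter
open scoped Interval

/-- The piecewise-defined `C²` regularization `g_{i,ε}` of `s ↦ (1/2)(|s| − δᵢ)₊²`. -/
noncomputable def greg (δi ε s : ℝ) : ℝ :=
  if |s| ≤ δi - ε then 0
  else if |s| ≤ δi + ε then 1 / (12 * ε) * (|s| - δi + ε) ^ 3
  else ε ^ 2 / 6 + 1 / 2 * (|s| - δi) ^ 2

/-- `K_{i,ε}(s) = ∫₀^s √(g_{i,ε}''(τ)) dτ`. -/
noncomputable def Kie (δi ε s : ℝ) : ℝ :=
  ∫ τ in (0:ℝ)..s, Real.sqrt (deriv (deriv (greg δi ε)) τ)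

/-- explicit second derivative -/
noncomputable def hfun (δi ε τ : ℝ) : ℝ :=
  if |τ| ≤ δi - ε then 0 else if |τ| ≤ δi + ε then (|τ| - δi + ε) / (2 * ε) else 1

lemma hfun_nonneg {δi ε : ℝ} (hε : 0 < ε) (hεδ : ε < δi) (τ : ℝ) : 0 ≤ hfun δi ε τ := by
  unfold hfun
  split_ifs with h1 h2
  · exact le_refl _
  · have : δi - ε < |τ| := lt_of_not_ge h1
    apply div_nonneg (by linarith) (by linarith)
  · exact zero_le_one

lemma hfun_le_one {δi ε : ℝ} (hε : 0 < ε) (hεδ : ε < δi) (τ : ℝ) : hfun δi ε τ ≤ 1 := by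
  unfold hfun
  split_ifs with h1 h2
  · exact zero_le_one
  · rw [div_le_one (by positivity)]; linarith
  · exact le_refl _

lemma deriv2_greg {δi ε : ℝ} (hε : 0 < ε) (hεδ : ε < δi) {τ : ℝ}
    (h1 : |τ| ≠ δi - ε) (h2 : |τ| ≠ δi + ε) :
    deriv (deriv (greg δi ε)) τ = hfun δi ε τ := by
  have hd : (0:ℝ) < δi - ε := by linarith
  have key : ∀ (f : ℝ → ℝ) (U : Set ℝ), IsOpen U → τ ∈ U → (∀ x ∈ U, greg δi ε x = f x) →
      deriv (deriv (greg δi ε)) τ = deriv (deriv f) τ := by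
    intro f U hU hτ hEq
    have heq : greg δi ε =ᶠ[nhds τ] f := eventually_of_mem (hU.mem_nhds hτ) hEq
    exact heq.deriv.deriv_eq
  rcases lt_trichotomy |τ| (δi - ε) with hA | hA | hA
  · -- inner region
    rw [key (fun _ => 0) {x | |x| < δi - ε} (isOpen_lt continuous_abs continuous_const) hA
        (fun x hx => by simp [greg, (le_of_lt hx : |x| ≤ δi - ε)])]
    simp [hfun, hA.le]
  · exact absurd hA h1
  have hτ0 : τ ≠ 0 := by
    intro h; rw [h, abs_zero] at hA; linarith
  rcases lt_trichotomy |τ| (δi + ε) with hB | hB | hB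
  · -- middle region
    have hhf : hfun δi ε τ = (|τ| - δi + ε) / (2 * ε) := by
      simp only [hfun, if_neg (not_le.mpr hA), if_pos hB.le]
    rcases hτ0.lt_or_gt with hneg | hpos
    · have hτabs : |τ| = -τ := abs_of_neg hneg
      rw [hτabs] at hA hB
      rw [key (fun x => 1/(12*ε) * (-x - (δi - ε))^3) (Ioo (-(δi+ε)) (-(δi-ε)))
          isOpen_Ioo ⟨by linarith, by linarith⟩ ?_]
      · have D1 : deriv (fun x => 1/(12*ε) * (-x - (δi - ε))^3)
            = fun x => -(1/(4*ε)) * (-x - (δi - ε))^2 := by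
          funext x
          refine HasDerivAt.deriv ?_
          have := ((((hasDerivAt_id x).neg.sub_const (δi - ε)).fun_pow 3).const_mul (1/(12*ε)))
          simp only [Pi.neg_apply, id_eq] at this
          refine this.congr_deriv ?_
          push_cast
          ring
        rw [D1]
        have D2 : HasDerivAt (fun x => -(1/(4*ε)) * (-x - (δi - ε))^2)
            ((-τ - (δi - ε)) / (2*ε)) τ := by
          have := ((((hasDerivAt_id τ).neg.sub_const (δi - ε)).fun_pow 2).const_mul (-(1/(4*ε))))
          simp only [Pi.neg_apply, id_eq] at this
          refine this.congr_deriv ?_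
          push_cast
          ring
        rw [D2.deriv, hhf, hτabs]
        ring
      · intro x hx
        have hx0 : x < 0 := by nlinarith [hx.1, hx.2]
        have hxa : |x| = -x := abs_of_neg hx0
        simp only [greg, hxa]
        rw [if_neg (by linarith [hx.2]), if_pos (by linarith [hx.1])]
        ring
    · have hτabs : |τ| = τ := abs_of_pos hpos
      rw [hτabs] at hA hB
      rw [key (fun x => 1/(12*ε) * (x - (δi - ε))^3) (Ioo (δi-ε) (δi+ε))
          isOpen_Ioo ⟨hA, hB⟩ ?_]
      · have D1 : deriv (fun x => 1/(12*ε) * (x - (δi - ε))^3)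
            = fun x => (1/(4*ε)) * (x - (δi - ε))^2 := by
          funext x
          refine HasDerivAt.deriv ?_
          have := (((hasDerivAt_id x).sub_const (δi - ε)).fun_pow 3).const_mul (1/(12*ε))
          simp only [Pi.neg_apply, id_eq] at this
          refine this.congr_deriv ?_
          push_cast
          ring
        rw [D1]
        have D2 : HasDerivAt (fun x => (1/(4*ε)) * (x - (δi - ε))^2)
            ((τ - (δi - ε)) / (2*ε)) τ := by
          have := (((hasDerivAt_id τ).sub_const (δi - ε)).fun_pow 2).const_mul (1/(4*ε))
          simp only [Pi.neg_apply, id_eq] at this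
          refine this.congr_deriv ?_
          push_cast
          ring
        rw [D2.deriv, hhf, hτabs]
        ring
      · intro x hx
        have hx0 : 0 < x := lt_trans hd hx.1
        have hxa : |x| = x := abs_of_pos hx0
        simp only [greg, hxa]
        rw [if_neg (not_le.mpr hx.1), if_pos hx.2.le]
        ring
  · exact absurd hB h2
  · -- outer region
    have hhf : hfun δi ε τ = 1 := by
      simp only [hfun, if_neg (not_le.mpr hA), if_neg (not_le.mpr hB)]
    rcases hτ0.lt_or_gt with hneg | hpos
    · have hτabs : |τ| = -τ := abs_of_neg hneg
      rw [hτabs] at hB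
      rw [key (fun x => ε^2/6 + 1/2 * (-x - δi)^2) (Iio (-(δi+ε)))
          (isOpen_Iio) (by simpa using by linarith : τ ∈ Iio (-(δi+ε))) ?_]
      · have D1 : deriv (fun x => ε^2/6 + 1/2 * (-x - δi)^2)
            = fun x => x + δi := by
          funext x
          refine HasDerivAt.deriv ?_
          have := ((((hasDerivAt_id x).neg.sub_const δi).fun_pow 2).const_mul (1/2)).const_add (ε^2/6)
          simp only [Pi.neg_apply, id_eq] at this
          convert this using 1
          push_cast
          ring
        rw [D1]
        have D2 : HasDerivAt (fun x : ℝ => x + δi) 1 τ := (hasDerivAt_id τ).add_const δi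
        rw [D2.deriv, hhf]
      · intro x hx
        have hx0 : x < 0 := by have := hx.out; simp only [mem_Iio] at hx; nlinarith
        have hxa : |x| = -x := abs_of_neg hx0
        simp only [mem_Iio] at hx
        simp only [greg, hxa]
        rw [if_neg (by linarith), if_neg (by linarith)]
    · have hτabs : |τ| = τ := abs_of_pos hpos
      rw [hτabs] at hB
      rw [key (fun x => ε^2/6 + 1/2 * (x - δi)^2) (Ioi (δi+ε))
          isOpen_Ioi (by simpa using hB) ?_]
      · have D1 : deriv (fun x => ε^2/6 + 1/2 * (x - δi)^2)
            = fun x => x - δi := by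
          funext x
          refine HasDerivAt.deriv ?_
          have := (((((hasDerivAt_id x)).sub_const δi).fun_pow 2).const_mul (1/2)).const_add (ε^2/6)
          simp only [Pi.neg_apply, id_eq] at this
          convert this using 1
          push_cast
          ring
        rw [D1]
        have D2 : HasDerivAt (fun x : ℝ => x - δi) 1 τ := (hasDerivAt_id τ).sub_const δi
        rw [D2.deriv, hhf]
      · intro x hx
        simp only [mem_Ioi] at hx
        have hx0 : 0 < x := by linarith
        have hxa : |x| = x := abs_of_pos hx0
        simp only [greg, hxa]
        rw [if_neg (by linarith), if_neg (by linarith)]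

lemma Kie_eq {δi ε : ℝ} (hε : 0 < ε) (hεδ : ε < δi) (s : ℝ) :
    Kie δi ε s = ∫ τ in (0:ℝ)..s, Real.sqrt (hfun δi ε τ) := by
  apply intervalIntegral.integral_congr_ae
  have hfin : (volume ({δi - ε, -(δi - ε), δi + ε, -(δi + ε)} : Set ℝ)) = 0 := by
    apply Set.Finite.measure_zero
    exact (Set.finite_singleton _).insert _ |>.insert _ |>.insert _
  have := measure_eq_zero_iff_ae_notMem.mp hfin
  filter_upwards [this] with x hx _
  have hx1 : |x| ≠ δi - ε := by
    intro h
    rcases abs_eq (by linarith : (0:ℝ) ≤ δi - ε) |>.mp h with h' | h' <;> simp_all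
  have hx2 : |x| ≠ δi + ε := by
    intro h
    rcases abs_eq (by linarith : (0:ℝ) ≤ δi + ε) |>.mp h with h' | h' <;> simp_all
  rw [deriv2_greg hε hεδ hx1 hx2]

noncomputable def ind (δi τ : ℝ) : ℝ := if δi < |τ| then 1 else 0

lemma ind_meas (δi : ℝ) : Measurable (ind δi) := by
  unfold ind
  exact Measurable.ite (measurableSet_lt measurable_const measurable_abs)
    measurable_const measurable_const

lemma intble_of_meas_bdd {f : ℝ → ℝ} (hm : Measurable f) (hb : ∀ x, |f x| ≤ 1) (a b : ℝ) :
    IntervalIntegrable f volume a b := by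
  constructor <;>
  · refine Integrable.mono' (g := fun _ => (1:ℝ))
      (integrableOn_const measure_Ioc_lt_top.ne)
      hm.aestronglyMeasurable.restrict ?_
    filter_upwards with x using by simpa using hb x

lemma ind_abs_le (δi x : ℝ) : |ind δi x| ≤ 1 := by
  unfold ind; split_ifs <;> simp

lemma hfun_meas (δi ε : ℝ) : Measurable (hfun δi ε) := by
  unfold hfun
  apply Measurable.ite (measurableSet_le measurable_abs measurable_const) measurable_const
  apply Measurable.ite (measurableSet_le measurable_abs measurable_const) ?_ measurable_const
  exact ((measurable_abs.sub measurable_const).add_const ε).div_const _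

lemma sqrt_hfun_abs_le {δi ε : ℝ} (hε : 0 < ε) (hεδ : ε < δi) (x : ℝ) :
    |Real.sqrt (hfun δi ε x)| ≤ 1 := by
  rw [abs_of_nonneg (Real.sqrt_nonneg _)]
  exact Real.sqrt_le_one.mpr (hfun_le_one hε hεδ x)

lemma Tval_nonneg {δi : ℝ} (hδ : 0 < δi) {s : ℝ} (hs : 0 ≤ s) :
    (∫ τ in (0:ℝ)..s, ind δi τ) = max (s - δi) 0 := by
  rcases le_or_gt s δi with h | h
  · rw [max_eq_right (by linarith)]
    rw [intervalIntegral.integral_congr (g := fun _ => (0:ℝ)) ?_, intervalIntegral.integral_zero]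
    intro x hx
    rw [uIcc_of_le hs] at hx
    have hxd : |x| ≤ δi := by rw [abs_of_nonneg hx.1]; linarith [hx.2]
    simp [ind, not_lt.mpr hxd]
  · rw [max_eq_left (by linarith)]
    have h0δ : (0:ℝ) ≤ δi := hδ.le
    rw [← intervalIntegral.integral_add_adjacent_intervals (b := δi)
      (intble_of_meas_bdd (ind_meas δi) (ind_abs_le δi) 0 δi)
      (intble_of_meas_bdd (ind_meas δi) (ind_abs_le δi) δi s)]
    have e1 : (∫ τ in (0:ℝ)..δi, ind δi τ) = 0 := by
      rw [intervalIntegral.integral_congr (g := fun _ => (0:ℝ)) ?_, intervalIntegral.integral_zero]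
      intro x hx
      rw [uIcc_of_le h0δ] at hx
      simp [ind, not_lt.mpr (by rw [abs_of_nonneg hx.1]; exact hx.2 : |x| ≤ δi)]
    have e2 : (∫ τ in δi..s, ind δi τ) = s - δi := by
      rw [intervalIntegral.integral_congr_ae (g := fun _ => (1:ℝ)) (Eventually.of_forall ?_)]
      · simp
      · intro x hx
        rw [uIoc_of_le h.le] at hx
        have : δi < |x| := by rw [abs_of_pos (lt_trans hδ hx.1)]; exact hx.1
        simp [ind, this]
    rw [e1, e2, zero_add]

lemma Tval {δi : ℝ} (hδ : 0 < δi) (s : ℝ) :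
    (∫ τ in (0:ℝ)..s, ind δi τ) = max (|s| - δi) 0 * Real.sign s := by
  rcases lt_trichotomy s 0 with hs | rfl | hs
  · have he : (∫ τ in (0:ℝ)..(-s), ind δi τ) = - ∫ τ in (0:ℝ)..s, ind δi τ := by
      rw [show (∫ τ in (0:ℝ)..(-s), ind δi τ) = ∫ τ in (0:ℝ)..(-s), ind δi (-τ) from
        intervalIntegral.integral_congr (fun x _ => by simp [ind, abs_neg])]
      rw [intervalIntegral.integral_comp_neg (fun τ => ind δi τ)]
      norm_num
      exact intervalIntegral.integral_symm 0 s
    have : (∫ τ in (0:ℝ)..s, ind δi τ) = - ∫ τ in (0:ℝ)..(-s), ind δi τ := by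
      rw [he]; ring
    rw [this, Tval_nonneg hδ (by linarith), abs_of_neg hs, Real.sign_of_neg hs]
    ring
  · simp
  · rw [Tval_nonneg hδ hs.le, abs_of_pos hs, Real.sign_of_pos hs, mul_one]

lemma diff_bound {δi ε : ℝ} (hε : 0 < ε) (hεδ : ε < δi) (x : ℝ) :
    ‖Real.sqrt (hfun δi ε x) - ind δi x‖ ≤
      Set.indicator {y : ℝ | δi - ε < |y| ∧ |y| ≤ δi + ε} (fun _ => 1) x := by
  rcases le_or_gt |x| (δi - ε) with h | h
  · have hni : ¬ δi < |x| := by push_neg; linarith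
    have hmem : x ∉ {y : ℝ | δi - ε < |y| ∧ |y| ≤ δi + ε} := by
      intro hc; exact absurd hc.1 (not_lt.mpr h)
    rw [Set.indicator_of_notMem hmem]
    simp [hfun, ind, h, hni]
  · rcases le_or_gt |x| (δi + ε) with h2 | h2
    · rw [Set.indicator_of_mem (show x ∈ {y : ℝ | δi - ε < |y| ∧ |y| ≤ δi + ε} from ⟨h, h2⟩)]
      have h0 : 0 ≤ Real.sqrt (hfun δi ε x) := Real.sqrt_nonneg _
      have h1' : Real.sqrt (hfun δi ε x) ≤ 1 := Real.sqrt_le_one.mpr (hfun_le_one hε hεδ x)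
      have hind : ind δi x = 0 ∨ ind δi x = 1 := by unfold ind; split_ifs <;> simp
      rw [Real.norm_eq_abs, abs_le]
      rcases hind with h' | h' <;> rw [h'] <;> constructor <;> linarith
    · have hgt : δi < |x| := by linarith
      have hmem : x ∉ {y : ℝ | δi - ε < |y| ∧ |y| ≤ δi + ε} := by
        intro hc; exact absurd hc.2 (not_le.mpr h2)
      rw [Set.indicator_of_notMem hmem]
      simp [hfun, ind, not_le.mpr h, not_le.mpr h2, hgt]

lemma key_bound {δi ε : ℝ} (hδ : 0 < δi) (hε : 0 < ε) (hεδ : ε < δi) (s : ℝ) :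
    |Kie δi ε s - max (|s| - δi) 0 * Real.sign s| ≤ 4 * ε := by
  set A : Set ℝ := {y : ℝ | δi - ε < |y| ∧ |y| ≤ δi + ε} with hA_def
  have hA : MeasurableSet A :=
    (measurableSet_lt measurable_const measurable_abs).inter
      (measurableSet_le measurable_abs measurable_const)
  have hAsub : A ⊆ Icc (-(δi+ε)) (-(δi-ε)) ∪ Icc (δi-ε) (δi+ε) := by
    intro x hx
    obtain ⟨hx1, hx2⟩ := hx
    rcases le_or_gt 0 x with h0 | h0
    · right; rw [abs_of_nonneg h0] at hx1 hx2; exact ⟨by linarith, hx2⟩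
    · left; rw [abs_of_neg h0] at hx1 hx2
      exact ⟨by linarith, by linarith⟩
  have hvol2 : volume A ≤ ENNReal.ofReal (2*ε) + ENNReal.ofReal (2*ε) := by
    refine (measure_mono hAsub).trans ((measure_union_le _ _).trans ?_)
    rw [Real.volume_Icc, Real.volume_Icc]
    gcongr <;> [skip; skip] <;> · apply le_of_eq; congr 1; ring
  have hAfin : volume A < ⊤ :=
    lt_of_le_of_lt hvol2 (by finiteness)
  have hvol : (volume A).toReal ≤ 4 * ε := by
    have := ENNReal.toReal_mono (by finiteness) hvol2
    rw [ENNReal.toReal_add (by finiteness) (by finiteness)] at this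
    rw [ENNReal.toReal_ofReal (by positivity)] at this
    linarith
  have hsq : IntervalIntegrable (fun τ => Real.sqrt (hfun δi ε τ)) volume 0 s :=
    intble_of_meas_bdd ((Real.continuous_sqrt.measurable).comp (hfun_meas δi ε))
      (sqrt_hfun_abs_le hε hεδ) 0 s
  have hin := intble_of_meas_bdd (ind_meas δi) (ind_abs_le δi) 0 s
  rw [Kie_eq hε hεδ, ← Tval hδ s, ← intervalIntegral.integral_sub hsq hin]
  have step1 : |∫ τ in (0:ℝ)..s, (Real.sqrt (hfun δi ε τ) - ind δi τ)|
      ≤ ∫ τ in Ι (0:ℝ) s, ‖Real.sqrt (hfun δi ε τ) - ind δi τ‖ := by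
    simpa [Real.norm_eq_abs] using
      intervalIntegral.norm_integral_le_integral_norm_uIoc
        (f := fun τ => Real.sqrt (hfun δi ε τ) - ind δi τ) (a := 0) (b := s) (μ := volume)
  have hgInt : Integrable (Set.indicator A (fun _ => (1:ℝ))) volume := by
    rw [integrable_indicator_iff hA]
    exact integrableOn_const hAfin.ne
  have step2 : (∫ τ in Ι (0:ℝ) s, ‖Real.sqrt (hfun δi ε τ) - ind δi τ‖)
      ≤ ∫ τ in Ι (0:ℝ) s, Set.indicator A (fun _ => (1:ℝ)) τ := by
    apply setIntegral_mono_on ?_ hgInt.integrableOn measurableSet_uIoc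
      (fun x _ => diff_bound hε hεδ x)
    exact (intervalIntegrable_iff.mp (hsq.sub hin)).norm
  have step3 : (∫ τ in Ι (0:ℝ) s, Set.indicator A (fun _ => (1:ℝ)) τ)
      ≤ ∫ τ, Set.indicator A (fun _ => (1:ℝ)) τ :=
    setIntegral_le_integral hgInt
      (Eventually.of_forall fun x => Set.indicator_nonneg (fun _ _ => zero_le_one) x)
  have step4 : (∫ τ, Set.indicator A (fun _ => (1:ℝ)) τ) = (volume A).toReal := by
    rw [MeasureTheory.integral_indicator hA, setIntegral_const]; simp [measureReal_def]
  calc |∫ τ in (0:ℝ)..s, (Real.sqrt (hfun δi ε τ) - ind δi τ)|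
      ≤ ∫ τ in Ι (0:ℝ) s, ‖Real.sqrt (hfun δi ε τ) - ind δi τ‖ := step1
    _ ≤ ∫ τ in Ι (0:ℝ) s, Set.indicator A (fun _ => (1:ℝ)) τ := step2
    _ ≤ (volume A).toReal := step3.trans_eq step4
    _ ≤ 4 * ε := hvol

/-- Let `δᵢ > 0`. Then `|K_{i,ε}(s)| ≤ |s|` for every `s ∈ ℝ` and every
`ε ∈ (0, δᵢ)`, and for every `s ∈ ℝ` one has
`K_{i,ε}(s) → (|s| − δᵢ)₊ · sign(s)` as `ε → 0⁺`. -/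
theorem stmt16 (δi : ℝ) (hδ : 0 < δi) :
    (∀ ε ∈ Set.Ioo 0 δi, ∀ s : ℝ, |Kie δi ε s| ≤ |s|) ∧
      (∀ s : ℝ, Filter.Tendsto (fun ε => Kie δi ε s) (nhdsWithin 0 (Set.Ioo 0 δi))
        (nhds (max (|s| - δi) 0 * Real.sign s))) := by
  constructor
  · intro ε hε s
    rw [Kie_eq hε.1 hε.2]
    have := intervalIntegral.norm_integral_le_of_norm_le_const (C := 1)
      (f := fun τ => Real.sqrt (hfun δi ε τ)) (a := 0) (b := s)
      (fun x _ => by simpa using sqrt_hfun_abs_le hε.1 hε.2 x)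
    simpa using this
  · intro s
    rw [tendsto_iff_dist_tendsto_zero]
    have h4 : Tendsto (fun ε : ℝ => 4 * ε) (nhdsWithin 0 (Ioo 0 δi)) (nhds 0) := by
      have : Tendsto (fun ε : ℝ => 4 * ε) (nhds 0) (nhds ((4:ℝ) * 0)) :=
        (continuous_const.mul continuous_id).tendsto 0
      simpa using this.mono_left nhdsWithin_le_nhds
    apply squeeze_zero' (Eventually.of_forall fun _ => dist_nonneg) ?_ h4
    filter_upwards [self_mem_nhdsWithin] with ε hε
    rw [Real.dist_eq]
    exact key_bound hδ hε.1 hε.2 s
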